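/- Let R = ℤ[A,A⁻¹] be the ring of Laurent polynomials over ℤ, let K = Frac(R) ≅ ℚ(A) be its field of fractions, let Q = R[t]/S where S is the R-submodule of R[t] generated by the elements r_n for n ≥ 2 (defined in the context), and let M = R ⊕ R ⊕ Q as an R-module. Then the rank of M over R is four; equivalently, the K-vector space K ⊗_R M has dimension 4 (i.e., K ⊗_R Q has dimension 2 over K). -/

import Mathlib

/-!
The rank over R = ℤ[A,A⁻¹] of M = R ⊕ R ⊕ Q (the KBSM of ℝP³ # ℝP³) is four:
the vector space K ⊗_R M over the fraction field K = Frac(R) ≅ ℚ(A) has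
dimension 4.
-/

open LaurentPolynomial Polynomial

noncomputable section

set_option maxHeartbeats 1000000
set_option synthInstance.maxHeartbeats 1000000

/-- The ring of Laurent polynomials `ℤ[A, A⁻¹]`; here `A = T 1`. -/
abbrev R : Type := LaurentPolynomial ℤ

/-- Chebyshev polynomials of the second kind: `S₀ = 1`, `S₁ = t`,
`S_{n+1} = t·S_n − S_{n−1}`, viewed in `R[t]`. -/
def cheb : ℕ → Polynomial R
  | 0 => 1
  | 1 => X
  | n + 2 => X * cheb (n + 1) - cheb n

/-- The relation `r_n ∈ R[t]` for `n ≥ 2`: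
for even `n`, `(A^{n+1} + A^{−(n+1)})(S_n(t) − 1) − 2(A + A^{−1})·∑_{k=1}^{n/2} A^{n+2−4k}`;
for odd `n`, `(A^{n+1} + A^{−(n+1)})(S_n(t) − t) − 2t·∑_{k=1}^{(n−1)/2} A^{n+1−4k}`. -/
def rel (n : ℕ) : Polynomial R :=
  if Even n then
    Polynomial.C (T ((n : ℤ) + 1) + T (-((n : ℤ) + 1))) * (cheb n - 1)
      - Polynomial.C ((2 : R) * (T 1 + T (-1)) *
          ∑ k ∈ Finset.range (n / 2), T ((n : ℤ) + 2 - 4 * ((k : ℤ) + 1)))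
  else
    Polynomial.C (T ((n : ℤ) + 1) + T (-((n : ℤ) + 1))) * (cheb n - X)
      - (2 : Polynomial R) * X *
          Polynomial.C (∑ k ∈ Finset.range ((n - 1) / 2), T ((n : ℤ) + 1 - 4 * ((k : ℤ) + 1)))

/-- The submodule `S ⊆ R[t]` generated by the `r_n`, `n ≥ 2`. -/
def SRel : Submodule R (Polynomial R) :=
  Submodule.span R {p : Polynomial R | ∃ n : ℕ, 2 ≤ n ∧ p = rel n}

/-- The quotient module `Q = R[t]/S`. -/
abbrev Qmod : Type := Polynomial R ⧸ SRel

/-! ### Auxiliary development -/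

instance : IsDomain R := NoZeroDivisors.to_isDomain _

/-- The fraction field `K ≅ ℚ(A)`. -/
abbrev KK : Type := FractionRing R

/-- Coefficientwise inclusion `R[X] → K[X]`. -/
def phi : Polynomial R →ₐ[R] Polynomial KK := Polynomial.mapAlgHom (Algebra.ofId R KK)

lemma phi_apply (p : Polynomial R) : phi p = p.map (algebraMap R KK) := rfl

lemma phi_injective : Function.Injective phi :=
  Polynomial.map_injective _ (IsFractionRing.injective R KK)

lemma phi_smul (r : R) (p : Polynomial R) : phi (r • p) = r • phi p :=
  map_smul phi.toLinearMap r p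

/-- The image of `SRel` spans a `K`-subspace `V` of `K[X]`. -/
def V : Submodule KK (Polynomial KK) :=
  Submodule.span KK (⇑phi '' (SRel : Set (Polynomial R)))

/-- `K[X]/V`. -/
abbrev Qbar : Type := Polynomial KK ⧸ V

lemma cheb_spec : ∀ n : ℕ, (cheb n).Monic ∧ (cheb n).natDegree = n
  | 0 => ⟨monic_one, natDegree_one⟩
  | 1 => ⟨monic_X, natDegree_X⟩
  | (n + 2) => by
    obtain ⟨h1, d1⟩ := cheb_spec (n + 1)
    obtain ⟨h0, d0⟩ := cheb_spec n
    have hx : (X * cheb (n + 1)).Monic := monic_X.mul h1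
    have hdx : (X * cheb (n + 1)).natDegree = n + 2 := by
      rw [natDegree_X_mul h1.ne_zero, d1]
    have hlt : (cheb n).natDegree < (X * cheb (n + 1)).natDegree := by omega
    have hdeg : (cheb n).degree < (X * cheb (n + 1)).degree := degree_lt_degree hlt
    refine ⟨?_, ?_⟩
    · show (X * cheb (n + 1) - cheb n).Monic
      exact hx.sub_of_left hdeg
    · show (X * cheb (n + 1) - cheb n).natDegree = n + 2
      rw [natDegree_sub_eq_left_of_natDegree_lt hlt, hdx]

/-- The leading coefficient of `rel n`. -/
def u (n : ℕ) : R := T ((n : ℤ) + 1) + T (-((n : ℤ) + 1))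

lemma u_ne_zero (n : ℕ) : u n ≠ 0 := by
  intro h
  have h2 : ((T ((n : ℤ) + 1) + T (-((n : ℤ) + 1))) * T ((n : ℤ) + 1) : R) = 0 := by
    rw [show T ((n : ℤ) + 1) + T (-((n : ℤ) + 1)) = u n from rfl, h, zero_mul]
  rw [add_mul, ← T_add, ← T_add] at h2
  have h3 : (-((n : ℤ) + 1)) + ((n : ℤ) + 1) = 0 := by ring
  rw [h3, T_zero] at h2
  have h4 : Polynomial.toLaurent (Polynomial.X ^ (2 * n + 2) + 1 : Polynomial ℤ)
      = T ((n : ℤ) + 1 + ((n : ℤ) + 1)) + 1 := by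
    rw [map_add, map_one, Polynomial.toLaurent_X_pow]
    congr 1
    congr 1
    push_cast
    ring
  rw [← h4] at h2
  have h5 : (Polynomial.X ^ (2 * n + 2) + 1 : Polynomial ℤ) = 0 :=
    Polynomial.toLaurent_injective h2
  have h6 := congrArg (fun p : Polynomial ℤ => p.coeff 0) h5
  simp [Polynomial.coeff_X_pow] at h6

lemma two_X_C_natDegree_le (w : R) :
    ((2 : Polynomial R) * X * Polynomial.C w).natDegree ≤ 1 := by
  refine le_trans natDegree_mul_le ?_
  have h1 : ((2 : Polynomial R) * X).natDegree ≤ 1 :=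
    le_trans natDegree_mul_le (by simp)
  simp only [natDegree_C]
  omega

lemma rel_coeff (n : ℕ) (hn : 2 ≤ n) : (rel n).coeff n = u n := by
  obtain ⟨hm, hd⟩ := cheb_spec n
  have hc : (cheb n).coeff n = 1 := by
    have := hm.coeff_natDegree
    rwa [hd] at this
  have hn0 : n ≠ 0 := by omega
  by_cases h : Even n
  · rw [rel, if_pos h, coeff_sub, coeff_C_mul, coeff_sub, hc, coeff_one, if_neg hn0,
      coeff_C, if_neg hn0]
    simp [u]
  · rw [rel, if_neg h, coeff_sub, coeff_C_mul, coeff_sub, hc]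
    have hX : (X : Polynomial R).coeff n = 0 := by
      rw [coeff_X, if_neg (by omega)]
    have hlow : ((2 : Polynomial R) * X *
        Polynomial.C (∑ k ∈ Finset.range ((n - 1) / 2),
          T ((n : ℤ) + 1 - 4 * ((k : ℤ) + 1)))).coeff n = 0 :=
      coeff_eq_zero_of_natDegree_lt (lt_of_le_of_lt (two_X_C_natDegree_le _) (by omega))
    rw [hX, hlow]
    simp [u]

lemma rel_natDegree_le (n : ℕ) (hn : 2 ≤ n) : (rel n).natDegree ≤ n := by
  obtain ⟨hm, hd⟩ := cheb_spec n
  by_cases h : Even n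
  · rw [rel, if_pos h]
    refine le_trans (natDegree_sub_le _ _) ?_
    refine max_le ?_ ?_
    · refine le_trans (natDegree_C_mul_le _ _) ?_
      refine le_trans (natDegree_sub_le _ _) ?_
      refine max_le hd.le ?_
      rw [natDegree_one]
      omega
    · rw [natDegree_C]
      omega
  · rw [rel, if_neg h]
    refine le_trans (natDegree_sub_le _ _) ?_
    refine max_le ?_ ?_
    · refine le_trans (natDegree_C_mul_le _ _) ?_
      refine le_trans (natDegree_sub_le _ _) ?_
      refine max_le hd.le ?_
      rw [natDegree_X]
      omega
    · exact le_trans (two_X_C_natDegree_le _) (by omega)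

lemma rel_natDegree (n : ℕ) (hn : 2 ≤ n) : (rel n).natDegree = n := by
  refine le_antisymm (rel_natDegree_le n hn) ?_
  apply le_natDegree_of_ne_zero
  rw [rel_coeff n hn]
  exact u_ne_zero n

lemma sigma_coeff (n : ℕ) (hn : 2 ≤ n) :
    (phi (rel n)).coeff n = algebraMap R KK (u n) := by
  rw [phi_apply, coeff_map, rel_coeff n hn]

lemma algebraMap_u_ne_zero (n : ℕ) : algebraMap R KK (u n) ≠ 0 := by
  intro h
  exact u_ne_zero n (IsFractionRing.injective R KK (by rw [map_zero]; exact h))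

lemma sigma_coeff_ne (n : ℕ) (hn : 2 ≤ n) : (phi (rel n)).coeff n ≠ 0 := by
  rw [sigma_coeff n hn]
  exact algebraMap_u_ne_zero n

lemma sigma_natDegree (n : ℕ) (hn : 2 ≤ n) : (phi (rel n)).natDegree = n := by
  refine le_antisymm ?_ (le_natDegree_of_ne_zero (sigma_coeff_ne n hn))
  rw [phi_apply]
  exact le_trans natDegree_map_le (rel_natDegree_le n hn)

/-- The generating set of `V` in `K[X]`. -/
def Gset : Set (Polynomial KK) := {q | ∃ n : ℕ, 2 ≤ n ∧ q = phi (rel n)}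

lemma V_eq : V = Submodule.span KK Gset := by
  apply le_antisymm
  · rw [V, Submodule.span_le]
    rintro - ⟨s, hs, rfl⟩
    simp only [SetLike.mem_coe]
    have hs' : s ∈ Submodule.span R {p : Polynomial R | ∃ n : ℕ, 2 ≤ n ∧ p = rel n} := hs
    clear hs
    induction hs' using Submodule.span_induction with
    | mem x hx =>
      obtain ⟨n, hn, rfl⟩ := hx
      exact Submodule.subset_span ⟨n, hn, rfl⟩
    | zero => simp
    | add x y hx hy ihx ihy => rw [map_add]; exact add_mem ihx ihy
    | smul r x hx ih =>
      rw [phi_smul, ← algebraMap_smul KK r (phi x)]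
      exact Submodule.smul_mem _ _ ih
  · rw [Submodule.span_le]
    rintro - ⟨n, hn, rfl⟩
    exact Submodule.subset_span ⟨rel n, Submodule.subset_span ⟨n, hn, rfl⟩, rfl⟩

lemma V_min {p : Polynomial KK} (hp : p ∈ V) (h0 : p ≠ 0) : 2 ≤ p.natDegree := by
  rw [V_eq, Submodule.mem_span_set] at hp
  obtain ⟨c, hsupp, hsum⟩ := hp
  have hne : c.support.Nonempty := by
    rcases Finset.eq_empty_or_nonempty c.support with h | h
    · exfalso; apply h0; rw [← hsum]; simp [Finsupp.sum, h]
    · exact h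
  obtain ⟨m₀, hm₀, hmax⟩ := Finset.exists_max_image c.support Polynomial.natDegree hne
  obtain ⟨n₀, hn₀, hm₀eq⟩ := hsupp hm₀
  have hNdeg : m₀.natDegree = n₀ := by rw [hm₀eq, sigma_natDegree n₀ hn₀]
  have hco : p.coeff n₀ = c m₀ * m₀.coeff n₀ := by
    rw [← hsum]
    have hs : (c.sum fun mi r => r • mi) = ∑ m ∈ c.support, c m • m := rfl
    rw [hs, finset_sum_coeff, Finset.sum_eq_single m₀]
    · simp
    · intro m hm hne'
      obtain ⟨n, hn, rfl⟩ := hsupp hm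
      have hlt : (phi (rel n)).natDegree < n₀ := by
        have hle : (phi (rel n)).natDegree ≤ m₀.natDegree := hmax _ hm
        rcases lt_or_eq_of_le hle with hcase | hcase
        · omega
        · exfalso
          apply hne'
          rw [hm₀eq]
          have : n = n₀ := by
            rw [sigma_natDegree n hn] at hcase
            omega
          rw [this]
      simp [coeff_eq_zero_of_natDegree_lt hlt]
    · intro hcon; exact absurd hm₀ hcon
  have hmcoeff : m₀.coeff n₀ ≠ 0 := by
    rw [hm₀eq]
    exact sigma_coeff_ne n₀ hn₀
  have hcoeffne : p.coeff n₀ ≠ 0 := by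
    rw [hco]
    exact mul_ne_zero (Finsupp.mem_support_iff.mp hm₀) hmcoeff
  exact le_trans hn₀ (le_natDegree_of_ne_zero hcoeffne)

lemma mkQ_low (p : Polynomial KK) (h1 : p.natDegree ≤ 1) :
    V.mkQ p ∈ Submodule.span KK {V.mkQ 1, V.mkQ X} := by
  have hp : p = Polynomial.C (p.coeff 1) * X + Polynomial.C (p.coeff 0) :=
    eq_X_add_C_of_natDegree_le_one h1
  have h2 : p = p.coeff 1 • (X : Polynomial KK) + p.coeff 0 • (1 : Polynomial KK) := by
    rw [Polynomial.smul_eq_C_mul, Polynomial.smul_eq_C_mul, mul_one]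
    exact hp
  rw [h2, map_add, map_smul, map_smul]
  exact add_mem
    (Submodule.smul_mem _ _ (Submodule.subset_span (by simp)))
    (Submodule.smul_mem _ _ (Submodule.subset_span (by simp)))

lemma mkQ_mem_span : ∀ (k : ℕ) (p : Polynomial KK), p.natDegree ≤ k →
    V.mkQ p ∈ Submodule.span KK {V.mkQ 1, V.mkQ X}
  | 0, p, hk => mkQ_low p (by omega)
  | (k + 1), p, hk => by
    by_cases h1 : p.natDegree ≤ 1
    · exact mkQ_low p h1
    · set n := p.natDegree with hn
      have hn2 : 2 ≤ n := by omega
      set d : KK := algebraMap R KK (u n) with hd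
      have hdne : d ≠ 0 := by rw [hd]; exact algebraMap_u_ne_zero n
      set q : Polynomial KK := p - Polynomial.C (p.coeff n * d⁻¹) * phi (rel n) with hq
      have hqc : q.coeff n = 0 := by
        rw [hq, coeff_sub, coeff_C_mul, sigma_coeff n hn2, ← hd, mul_assoc,
          inv_mul_cancel₀ hdne, mul_one, sub_self]
      have hqd : q.natDegree ≤ k := by
        have hle : q.natDegree ≤ n := by
          rw [hq]
          refine le_trans (natDegree_sub_le _ _) ?_
          refine max_le le_rfl ?_
          refine le_trans (natDegree_C_mul_le _ _) ?_
          rw [sigma_natDegree n hn2]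
        rcases eq_or_ne q 0 with hq0 | hq0
        · rw [hq0]; simp
        · have hqne : q.coeff q.natDegree ≠ 0 := by
            rw [← leadingCoeff]
            exact leadingCoeff_ne_zero.mpr hq0
          have : q.natDegree ≠ n := fun hcon => hqne (by rw [hcon]; exact hqc)
          omega
      have hmem : Polynomial.C (p.coeff n * d⁻¹) * phi (rel n) ∈ V := by
        rw [← Polynomial.smul_eq_C_mul]
        refine Submodule.smul_mem _ _ ?_
        rw [V_eq]
        exact Submodule.subset_span ⟨n, hn2, rfl⟩
      have hz : V.mkQ (Polynomial.C (p.coeff n * d⁻¹) * phi (rel n)) = 0 := by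
        rw [Submodule.mkQ_apply, Submodule.Quotient.mk_eq_zero]
        exact hmem
      have hpq : V.mkQ p = V.mkQ q := by
        rw [hq, map_sub, hz, sub_zero]
      rw [hpq]
      exact mkQ_mem_span k q hqd

lemma rank_Qbar : Module.rank KK Qbar = 2 := by
  have hsub : ({V.mkQ 1, V.mkQ X} : Set Qbar) ⊆ Set.range ![V.mkQ 1, V.mkQ X] := by
    intro x hx
    rcases Set.mem_insert_iff.mp hx with rfl | hx2
    · exact ⟨0, rfl⟩
    · rcases Set.mem_singleton_iff.mp hx2 with rfl
      exact ⟨1, rfl⟩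
  have hsp : ⊤ ≤ Submodule.span KK (Set.range ![V.mkQ 1, V.mkQ X]) := by
    rintro x -
    obtain ⟨p, rfl⟩ := V.mkQ_surjective x
    exact Submodule.span_mono hsub (mkQ_mem_span p.natDegree p le_rfl)
  have hli : LinearIndependent KK ![V.mkQ 1, V.mkQ X] := by
    rw [linearIndependent_fin2]
    constructor
    · intro h
      simp only [Matrix.cons_val_one, Matrix.head_cons] at h
      have hX : (X : Polynomial KK) ∈ V := by
        rwa [Submodule.mkQ_apply, Matrix.cons_val_zero, Submodule.Quotient.mk_eq_zero] at h
      have := V_min hX X_ne_zero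
      simp [natDegree_X] at this
    · intro a h
      simp only [Matrix.cons_val_one, Matrix.head_cons, Matrix.cons_val_zero] at h
      have hmem : (a • X - 1 : Polynomial KK) ∈ V := by
        have hz : V.mkQ (a • X - 1) = 0 := by
          rw [map_sub, map_smul, h, sub_self]
        rwa [Submodule.mkQ_apply, Submodule.Quotient.mk_eq_zero] at hz
      have hne : (a • X - 1 : Polynomial KK) ≠ 0 := by
        intro h0
        have := congrArg (fun p : Polynomial KK => p.coeff 0) h0
        simp [coeff_smul, coeff_X, coeff_one] at this
      have h2 := V_min hmem hne
      have hle : (a • X - 1 : Polynomial KK).natDegree ≤ 1 := by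
        refine le_trans (natDegree_sub_le _ _) ?_
        refine max_le ?_ ?_
        · rw [Polynomial.smul_eq_C_mul]
          refine le_trans (natDegree_C_mul_le _ _) ?_
          rw [natDegree_X]
        · rw [natDegree_one]
          omega
      omega
  let b : Module.Basis (Fin 2) KK Qbar := Module.Basis.mk hli hsp
  rw [rank_eq_card_basis b]
  simp

/-- The localization map `Qmod → Qbar`. -/
def gmap : Qmod →ₗ[R] Qbar :=
  SRel.liftQ ((V.mkQ.restrictScalars R) ∘ₗ phi.toLinearMap)
    (fun x hx => by
      simp only [LinearMap.mem_ker, LinearMap.comp_apply, LinearMap.coe_restrictScalars,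
        AlgHom.toLinearMap_apply, Submodule.mkQ_apply]
      rw [Submodule.Quotient.mk_eq_zero]
      exact Submodule.subset_span (Set.mem_image_of_mem _ hx))

lemma gmap_mk (p : Polynomial R) :
    gmap (Submodule.Quotient.mk p) = V.mkQ (phi p) := rfl

/-- Clearing denominators in `V`. -/
lemma clear_denom {q : Polynomial KK} (hq : q ∈ V) :
    ∃ (d : nonZeroDivisors R) (w : Polynomial R), w ∈ SRel ∧
      phi w = (d : R) • q := by
  induction hq using Submodule.span_induction with
  | mem x hx =>
    obtain ⟨s, hs, rfl⟩ := hx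
    exact ⟨1, s, hs, by simp⟩
  | zero => exact ⟨1, 0, zero_mem _, by simp⟩
  | add x y hx hy ihx ihy =>
    obtain ⟨dx, wx, hwx, hex⟩ := ihx
    obtain ⟨dy, wy, hwy, hey⟩ := ihy
    refine ⟨dx * dy, (dy : R) • wx + (dx : R) • wy,
      add_mem (Submodule.smul_mem _ _ hwx) (Submodule.smul_mem _ _ hwy), ?_⟩
    rw [map_add, phi_smul, phi_smul, hex, hey, Submonoid.coe_mul]
    rw [smul_add, mul_smul, mul_smul]
    rw [smul_comm ((dy : R)) ((dx : R)) x]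
  | smul k x hx ih =>
    obtain ⟨dx, wx, hwx, hex⟩ := ih
    obtain ⟨⟨r, s⟩, hrs : IsLocalization.mk' KK r s = k⟩ := IsLocalization.mk'_surjective (nonZeroDivisors R) k
    have hk : ((s : R) • k) = algebraMap R KK r := by
      rw [Algebra.smul_def, ← hrs, mul_comm]
      exact IsLocalization.mk'_spec KK r s
    refine ⟨s * dx, r • wx, Submodule.smul_mem _ _ hwx, ?_⟩
    rw [phi_smul, hex, Submonoid.coe_mul, mul_smul, smul_comm ((dx : R)) k x]
    conv_rhs => rw [← smul_assoc, hk, algebraMap_smul]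

instance gmap_isLocalized : IsLocalizedModule (nonZeroDivisors R) gmap := by
  constructor
  · intro s
    rw [Module.End.isUnit_iff]
    have hs : algebraMap R KK (s : R) ≠ 0 :=
      IsFractionRing.to_map_ne_zero_of_mem_nonZeroDivisors s.2
    have hx : ∀ z : Qbar, (algebraMap R (Module.End R Qbar)) (s : R) z
        = (algebraMap R KK (s : R)) • z := fun z => by
      rw [Module.algebraMap_end_apply, algebraMap_smul]
    constructor
    · intro x y h
      rw [hx, hx] at h
      have h2 : (algebraMap R KK (s : R))⁻¹ • (algebraMap R KK (s : R)) • x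
          = (algebraMap R KK (s : R))⁻¹ • (algebraMap R KK (s : R)) • y := by rw [h]
      rwa [smul_smul, smul_smul, inv_mul_cancel₀ hs, one_smul, one_smul] at h2
    · intro y
      refine ⟨(algebraMap R KK (s : R))⁻¹ • y, ?_⟩
      rw [hx, smul_smul, mul_inv_cancel₀ hs, one_smul]
  · intro y
    obtain ⟨p, rfl⟩ := V.mkQ_surjective y
    obtain ⟨b, hb⟩ := IsLocalization.integerNormalization_map_to_map (nonZeroDivisors R) p
    refine ⟨⟨Submodule.Quotient.mk (IsLocalization.integerNormalization (nonZeroDivisors R) p),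
      b⟩, ?_⟩
    show (b : R) • V.mkQ p
      = gmap (Submodule.Quotient.mk (IsLocalization.integerNormalization (nonZeroDivisors R) p))
    rw [gmap_mk, phi_apply, hb, Submodule.mkQ_apply, Submodule.mkQ_apply,
      Submodule.Quotient.mk_smul]
  · intro x₁ x₂ h
    obtain ⟨p₁, rfl⟩ := SRel.mkQ_surjective x₁
    obtain ⟨p₂, rfl⟩ := SRel.mkQ_surjective x₂
    rw [Submodule.mkQ_apply, Submodule.mkQ_apply, gmap_mk, gmap_mk] at h
    have hV : phi (p₁ - p₂) ∈ V := by
      have h0 : V.mkQ (phi p₁ - phi p₂) = 0 := by rw [map_sub, h, sub_self]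
      rw [← map_sub] at h0
      rwa [Submodule.mkQ_apply, Submodule.Quotient.mk_eq_zero] at h0
    obtain ⟨d, w, hw, he⟩ := clear_denom hV
    have hdp : (d : R) • (p₁ - p₂) = w :=
      phi_injective (by rw [phi_smul]; exact he.symm)
    refine ⟨d, ?_⟩
    rw [Submonoid.smul_def, Submonoid.smul_def, Submodule.mkQ_apply, Submodule.mkQ_apply,
      ← Submodule.Quotient.mk_smul, ← Submodule.Quotient.mk_smul, Submodule.Quotient.eq]
    rw [← smul_sub, hdp]
    exact hw

lemma rank_Qmod : Module.rank R Qmod = 2 := by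
  rw [← IsLocalizedModule.rank_eq (p := nonZeroDivisors R) (hp := le_rfl) (f := gmap),
    ← IsLocalization.rank_eq (S := KK) (p := nonZeroDivisors R) (hp := le_rfl) (N := Qbar)]
  exact rank_Qbar

lemma rank_prod_dom (M N : Type) [AddCommGroup M] [Module R M] [AddCommGroup N] [Module R N] :
    Module.rank R (M × N) = Module.rank R M + Module.rank R N := by
  have h := LinearMap.rank_range_add_rank_ker (LinearMap.snd R M N)
  have e := (LinearEquiv.ofInjective (LinearMap.inl R M N) LinearMap.inl_injective).rank_eq
  rw [LinearMap.ker_snd, ← e, LinearMap.range_eq_top.mpr LinearMap.snd_surjective,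
    rank_top] at h
  rw [← h, add_comm]

open TensorProduct in
/-- The rank of `M = R × R × Q` over `R = ℤ[A,A⁻¹]` is four: the
`K = Frac(R) ≅ ℚ(A)`-vector space `K ⊗_R M` is `4`-dimensional. -/
theorem rank_eq_four :
    Module.rank (FractionRing R) (FractionRing R ⊗[R] (R × R × Qmod)) = 4 := by
  haveI : IsLocalizedModule (nonZeroDivisors R)
      (TensorProduct.mk R (FractionRing R) (R × R × Qmod) 1) := by
    rw [isLocalizedModule_iff_isBaseChange (nonZeroDivisors R) (FractionRing R)]
    exact TensorProduct.isBaseChange R _ _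
  rw [IsLocalization.rank_eq (S := FractionRing R) (p := nonZeroDivisors R) (hp := le_rfl),
    IsLocalizedModule.rank_eq (p := nonZeroDivisors R) (hp := le_rfl)
    (f := TensorProduct.mk R (FractionRing R) (R × R × Qmod) 1)]
  rw [rank_prod_dom, rank_prod_dom, Module.rank_self, rank_Qmod]
  norm_num

end
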